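/- arXiv:1703.02160 — 7 statements merged into one kernel-verified Lean document; each statement's English description precedes it below -/
import Mathlib

section
/- The action of Γ on a Γ-invariant open subset Ω ⊆ Z is properly discontinuous if and only if no two points of Ω are Γ-dynamically related. -/
open Pointwise Filter Topology

def DynRel (Γ : Type*) {Z : Type*} [Group Γ] [MulAction Γ Z] [TopologicalSpace Z]
    (ξ ξ' : Z) : Prop :=
  ∀ U ∈ nhds ξ, ∀ U' ∈ nhds ξ', {γ : Γ | ((γ • U) ∩ U').Nonempty}.Infinite

theorem properlyDiscontinuous_iff_no_dynRel {Γ Z : Type*} [Group Γ] [TopologicalSpace Z]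
    [TopologicalSpace.MetrizableSpace Z] [LocallyCompactSpace Z]
    [MulAction Γ Z] [ContinuousConstSMul Γ Z]
    (Ω : Set Z) (hΩopen : IsOpen Ω) (hΩinv : ∀ γ : Γ, γ • Ω = Ω) :
    (∀ K : Set Z, K ⊆ Ω → IsCompact K → {γ : Γ | ((γ • K) ∩ K).Nonempty}.Finite) ↔
      (∀ ξ ∈ Ω, ∀ ξ' ∈ Ω, ¬ DynRel Γ ξ ξ') := by
  constructor
  · intro hPD ξ hξ ξ' hξ' hd
    obtain ⟨K, hKc, hξK, hKΩ⟩ := exists_compact_subset hΩopen hξ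
    obtain ⟨K', hK'c, hξ'K', hK'Ω⟩ := exists_compact_subset hΩopen hξ'
    have hfin := hPD (K ∪ K') (Set.union_subset hKΩ hK'Ω) (hKc.union hK'c)
    have hinf := hd K (mem_interior_iff_mem_nhds.mp hξK) K'
      (mem_interior_iff_mem_nhds.mp hξ'K')
    refine absurd hfin (hinf.mono fun γ hγ => ?_)
    obtain ⟨z, hz1, hz2⟩ := hγ
    exact ⟨z, Set.smul_set_mono Set.subset_union_left hz1, Set.subset_union_right hz2⟩
  · intro h K hKΩ hKc
    by_contra hinf
    rw [← Set.not_infinite, not_not] at hinf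
    letI := TopologicalSpace.metrizableSpaceMetric Z
    set e := hinf.natEmbedding with he
    have hx : ∀ n : ℕ, ∃ z, z ∈ K ∧ (e n : Γ) • z ∈ K := by
      intro n
      obtain ⟨w, hw1, hw2⟩ := (e n).2
      obtain ⟨z, hz, rfl⟩ := hw1
      exact ⟨z, hz, hw2⟩
    choose x hx1 hx2 using hx
    obtain ⟨ξ, hξK, φ, hφ, hxlim⟩ := hKc.tendsto_subseq hx1
    obtain ⟨ξ', hξ'K, ψ, hψ, hylim⟩ :=
      hKc.tendsto_subseq (x := fun n => (e (φ n) : Γ) • x (φ n)) (fun n => hx2 (φ n))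
    refine h ξ (hKΩ hξK) ξ' (hKΩ hξ'K) ?_
    intro U hU U' hU'
    have hxlim' : Tendsto (fun n => x (φ (ψ n))) atTop (𝓝 ξ) :=
      hxlim.comp hψ.tendsto_atTop
    have ev1 : ∀ᶠ n in atTop, x (φ (ψ n)) ∈ U := hxlim' (by exact hU)
    have ev2 : ∀ᶠ n in atTop, (e (φ (ψ n)) : Γ) • x (φ (ψ n)) ∈ U' := hylim (by exact hU')
    obtain ⟨N, hN⟩ := (ev1.and ev2).exists_forall_of_atTop
    refine Set.infinite_of_injective_forall_mem
      (f := fun n : ℕ => (e (φ (ψ (n + N))) : Γ)) ?_ ?_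
    · intro a b hab
      have : φ (ψ (a + N)) = φ (ψ (b + N)) :=
        e.injective (Subtype.coe_injective hab)
      have := (hφ.comp hψ).injective this
      omega
    · intro n
      obtain ⟨h1, h2⟩ := hN (n + N) (by omega)
      exact ⟨(e (φ (ψ (n + N))) : Γ) • x (φ (ψ (n + N))), ⟨_, h1, rfl⟩, h2⟩
end

section
/- If a sequence of homeomorphisms g_k of a compact metrizable space Z with at least three points converges to the constant map with value α uniformly on compact subsets of Z ∖ {ω}, then the sequence of inverses g_k^{-1} converges to the constant map with value ω uniformly on compact subsets of Z ∖ {α}. -/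
theorem inverse_converges_to_repeller {Z : Type*} [TopologicalSpace Z] [CompactSpace Z]
    [TopologicalSpace.MetrizableSpace Z]
    (hZ : ∃ a b c : Z, a ≠ b ∧ a ≠ c ∧ b ≠ c)
    (g : ℕ → Homeomorph Z Z) (α ω : Z)
    (h : ∀ K : Set Z, K ⊆ {ω}ᶜ → IsCompact K →
      ∀ V ∈ nhds α, ∀ᶠ k in Filter.atTop, (g k : Z → Z) '' K ⊆ V) :
    ∀ K : Set Z, K ⊆ {α}ᶜ → IsCompact K →
      ∀ V ∈ nhds ω, ∀ᶠ k in Filter.atTop, ((g k).symm : Z → Z) '' K ⊆ V := by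
  letI := TopologicalSpace.metrizableSpaceMetric Z
  intro K hKα hKc V hV
  obtain ⟨U, hUV, hUopen, hωU⟩ := mem_nhds_iff.mp hV
  have hUc : Uᶜ ⊆ ({ω}ᶜ : Set Z) := by
    intro x hx hxω
    exact hx (by simpa using hxω ▸ hωU)
  have hUcc : IsCompact (Uᶜ : Set Z) := hUopen.isClosed_compl.isCompact
  have hKo : Kᶜ ∈ nhds α := by
    have : IsOpen (Kᶜ : Set Z) := hKc.isClosed.isOpen_compl
    exact this.mem_nhds fun hαK => hKα hαK rfl
  filter_upwards [h Uᶜ hUc hUcc Kᶜ hKo] with k hk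
  rintro y ⟨x, hxK, rfl⟩
  by_contra hyV
  have hU : (g k).symm x ∈ Uᶜ := fun hu => hyV (hUV hu)
  have := hk ⟨(g k).symm x, hU, rfl⟩
  simp at this
  exact this hxK
end

section
/- Let Z be a compact metrizable space with at least three points and let (g_k) be a sequence of homeomorphisms of Z. If (g_k) converges to the constant map α uniformly on compact subsets of Z ∖ {ω} and also converges to the constant map α' uniformly on compact subsets of Z ∖ {ω'}, then α = α' and ω = ω'. -/
open Filter Metric

theorem attractor_repeller_unique {Z : Type*} [MetricSpace Z] [CompactSpace Z]
    (hZ : ∃ a b c : Z, a ≠ b ∧ a ≠ c ∧ b ≠ c)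
    (g : ℕ → Homeomorph Z Z) (α ω α' ω' : Z)
    (h : ∀ K : Set Z, K ⊆ {ω}ᶜ → IsCompact K →
      TendstoUniformlyOn (fun k z => (g k : Z → Z) z) (fun _ => α) Filter.atTop K)
    (h' : ∀ K : Set Z, K ⊆ {ω'}ᶜ → IsCompact K →
      TendstoUniformlyOn (fun k z => (g k : Z → Z) z) (fun _ => α') Filter.atTop K) :
    α = α' ∧ ω = ω' := by
  obtain ⟨a, b, c, hab, hac, hbc⟩ := hZ
  -- a point distinct from ω and ω'
  have hz : ∃ z : Z, z ≠ ω ∧ z ≠ ω' := by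
    by_cases ha : a ≠ ω ∧ a ≠ ω'
    · exact ⟨a, ha⟩
    by_cases hb : b ≠ ω ∧ b ≠ ω'
    · exact ⟨b, hb⟩
    by_cases hc : c ≠ ω ∧ c ≠ ω'
    · exact ⟨c, hc⟩
    push_neg at ha hb hc
    rcases eq_or_ne a ω with h1 | h1 <;> rcases eq_or_ne b ω with h2 | h2 <;>
      rcases eq_or_ne c ω with h3 | h3 <;> simp_all
  obtain ⟨z, hz1, hz2⟩ := hz
  have hαz : Tendsto (fun k => (g k : Z → Z) z) atTop (nhds α) :=
    (h {z} (by simpa using Ne.symm hz1) isCompact_singleton).tendsto_at (Set.mem_singleton z)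
  have hα'z : Tendsto (fun k => (g k : Z → Z) z) atTop (nhds α') :=
    (h' {z} (by simpa using Ne.symm hz2) isCompact_singleton).tendsto_at (Set.mem_singleton z)
  have hαα : α = α' := tendsto_nhds_unique hαz hα'z
  refine ⟨hαα, ?_⟩
  by_contra hω
  -- a point distinct from α
  obtain ⟨p, hp⟩ : ∃ p : Z, p ≠ α := by
    rcases eq_or_ne a α with h1 | h1
    · exact ⟨b, fun hb => hab (h1.trans hb.symm)⟩
    · exact ⟨a, h1⟩
  set ε : ℝ := dist ω ω' / 2 with hε_def
  have hε : 0 < ε := by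
    have := dist_pos.mpr hω
    positivity
  set K : Set Z := (Metric.ball ω ε)ᶜ with hK_def
  set K' : Set Z := (Metric.ball ω' ε)ᶜ with hK'_def
  have hKc : IsCompact K := (Metric.isOpen_ball.isClosed_compl).isCompact
  have hK'c : IsCompact K' := (Metric.isOpen_ball.isClosed_compl).isCompact
  have hKsub : K ⊆ {ω}ᶜ := by
    intro x hx
    simp only [Set.mem_compl_iff, Set.mem_singleton_iff]
    rintro rfl
    exact hx (Metric.mem_ball_self hε)
  have hK'sub : K' ⊆ {ω'}ᶜ := by
    intro x hx
    simp only [Set.mem_compl_iff, Set.mem_singleton_iff]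
    rintro rfl
    exact hx (Metric.mem_ball_self hε)
  have hcover : ∀ x : Z, x ∈ K ∨ x ∈ K' := by
    intro x
    by_contra hx
    push_neg at hx
    obtain ⟨hx1, hx2⟩ := hx
    simp only [hK_def, hK'_def, Set.notMem_compl_iff, Metric.mem_ball] at hx1 hx2
    have : dist ω ω' < 2 * ε := by
      calc dist ω ω' ≤ dist ω x + dist x ω' := dist_triangle _ _ _
        _ < ε + ε := by rw [dist_comm ω x]; exact add_lt_add hx1 hx2
        _ = 2 * ε := by ring
    rw [hε_def] at this
    linarith
  have hδ : 0 < dist p α := dist_pos.mpr hp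
  have H1 := (Metric.tendstoUniformlyOn_iff.mp (h K hKsub hKc)) (dist p α) hδ
  have H2 := (Metric.tendstoUniformlyOn_iff.mp (h' K' hK'sub hK'c)) (dist p α) hδ
  obtain ⟨k, hk1, hk2⟩ := ((H1.and H2).exists)
  set x : Z := (g k).symm p with hx_def
  have hgx : (g k : Z → Z) x = p := (g k).apply_symm_apply p
  have : dist α p < dist p α := by
    rcases hcover x with hx | hx
    · have := hk1 x hx
      rwa [hgx] at this
    · have := hk2 x hx
      rw [hgx, ← hαα] at this
      exact this
  rw [dist_comm] at this
  exact lt_irrefl _ this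
end

section
/- Suppose a group Γ acts by homeomorphisms on a compact metric space (Z, d), preserving a compact subset E, and the action is expanding at E: for every z ∈ E there exist γ ∈ Γ, a constant c > 1, and a neighborhood U of z such that d(γz', γz'') ≥ c·d(z', z'') for all z', z'' ∈ U. Then the action of Γ on Z ∖ E is cocompact: there is a compact subset K ⊆ Z ∖ E with Γ·K = Z ∖ E. -/
open Pointwise Metric

theorem expanding_action_cocompact_on_complement {Z : Type*} [MetricSpace Z] [CompactSpace Z]
    {Γ : Type*} [Group Γ] [MulAction Γ Z] [ContinuousConstSMul Γ Z]
    (E : Set Z) (hEcompact : IsCompact E) (hEinv : ∀ γ : Γ, γ • E = E)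
    (hexp : ∀ z ∈ E, ∃ (γ : Γ) (c : ℝ), 1 < c ∧ ∃ U ∈ nhds z,
      ∀ z' ∈ U, ∀ z'' ∈ U, c * dist z' z'' ≤ dist (γ • z') (γ • z'')) :
    ∃ K : Set Z, IsCompact K ∧ K ⊆ Eᶜ ∧ (⋃ γ : Γ, γ • K) = Eᶜ := by
  rcases E.eq_empty_or_nonempty with hE | hEne
  · refine ⟨Set.univ, isCompact_univ, by simp [hE], ?_⟩
    rw [hE, Set.compl_empty]
    apply Set.eq_univ_iff_forall.mpr
    intro z
    exact Set.mem_iUnion.mpr ⟨1, Set.mem_smul_set.mpr ⟨z, trivial, one_smul _ _⟩⟩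
  have hEclosed : IsClosed E := hEcompact.isClosed
  choose! γ c hc hU using hexp
  have hball : ∀ e ∈ E, ∃ r > 0, ∀ z' ∈ ball e (3 * r), ∀ z'' ∈ ball e (3 * r),
      c e * dist z' z'' ≤ dist (γ e • z') (γ e • z'') := by
    intro e he
    obtain ⟨U, hUn, hUe⟩ := hU e he
    obtain ⟨ε, hε, hsub⟩ := Metric.mem_nhds_iff.mp hUn
    refine ⟨ε / 3, by linarith, fun z' h' z'' h'' => hUe z' ?_ z'' ?_⟩
    · exact hsub (mem_ball.mpr (by have := mem_ball.mp h'; linarith))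
    · exact hsub (mem_ball.mpr (by have := mem_ball.mp h''; linarith))
  choose! r hr hexp2 using hball
  obtain ⟨t, htE, hcover⟩ := hEcompact.elim_nhds_subcover (fun e => ball e (r e))
    (fun e he => ball_mem_nhds e (hr e he))
  have htne : t.Nonempty := by
    obtain ⟨e₀, he₀⟩ := hEne
    rcases Set.mem_iUnion₂.mp (hcover he₀) with ⟨i, hi, _⟩
    exact ⟨i, hi⟩
  set c₀ := t.inf' htne c with hc₀def
  have hc₀ : 1 < c₀ := (Finset.lt_inf'_iff _).mpr fun i hi => hc i (htE i hi)
  set r₀ := t.inf' htne r with hr₀def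
  have hr₀ : 0 < r₀ := (Finset.lt_inf'_iff _).mpr fun i hi => hr i (htE i hi)
  have hcpos : ∀ i ∈ t, 0 < c i := fun i hi => lt_trans one_pos (hc i (htE i hi))
  have hucont : ∀ i ∈ t, ∃ η > 0, ∀ a b : Z, dist a b < η →
      dist ((γ i)⁻¹ • a) ((γ i)⁻¹ • b) < r₀ := by
    intro i _
    have huc : UniformContinuous (fun a : Z => (γ i)⁻¹ • a) :=
      CompactSpace.uniformContinuous_of_continuous (continuous_const_smul _)
    obtain ⟨η, hη, h⟩ := Metric.uniformContinuous_iff.mp huc r₀ hr₀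
    exact ⟨η, hη, fun a b hab => h hab⟩
  choose! η hη hηc using hucont
  obtain ⟨δ, hδpos, hδr, hδη⟩ : ∃ δ > 0, δ ≤ r₀ ∧ ∀ i ∈ t, c i * δ ≤ η i := by
    refine ⟨min r₀ (t.inf' htne (fun i => η i / c i)), ?_, min_le_left _ _, ?_⟩
    · exact lt_min hr₀ ((Finset.lt_inf'_iff _).mpr fun i hi =>
        div_pos (hη i hi) (hcpos i hi))
    · intro i hi
      have h1 : min r₀ (t.inf' htne (fun i => η i / c i)) ≤ η i / c i :=
        le_trans (min_le_right _ _) (Finset.inf'_le _ hi)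
      have h2 := mul_le_mul_of_nonneg_left h1 (hcpos i hi).le
      rwa [mul_div_cancel₀ _ (hcpos i hi).ne'] at h2
  -- the key expansion step
  have step : ∀ z : Z, z ∉ E → infDist z E < δ →
      ∃ g : Γ, c₀ * infDist z E ≤ infDist (g • z) E := by
    intro z hz hzδ
    obtain ⟨e₀, he₀, he₀d⟩ := hEcompact.exists_infDist_eq_dist hEne z
    obtain ⟨i, hit, hi⟩ := Set.mem_iUnion₂.mp (hcover he₀)
    refine ⟨γ i, ?_⟩
    by_contra hcon
    push_neg at hcon
    obtain ⟨w, hw, hwd⟩ := hEcompact.exists_infDist_eq_dist hEne (γ i • z)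
    set w' := (γ i)⁻¹ • w with hw'def
    have hw'E : w' ∈ E := by
      rw [← hEinv (γ i)⁻¹]; exact Set.smul_mem_smul_set hw
    have hzE_le : infDist z E ≤ dist z w' := infDist_le_dist_of_mem hw'E
    have hzE_pos : 0 < infDist z E := (hEclosed.notMem_iff_infDist_pos hEne).mp hz
    have hiE := htE i hit
    have hci : 0 < c i := hcpos i hit
    have hc₀i : c₀ ≤ c i := Finset.inf'_le _ hit
    have hri : r₀ ≤ r i := Finset.inf'_le _ hit
    have hripos : 0 < r i := hr i hiE
    have h1 : dist (γ i • z) w < c i * δ := by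
      rw [← hwd]
      calc infDist (γ i • z) E < c₀ * infDist z E := hcon
        _ ≤ c i * δ := by nlinarith
    have h2 : dist z w' < r₀ := by
      have h3 := hηc i hit (γ i • z) w (lt_of_lt_of_le h1 (hδη i hit))
      rwa [inv_smul_smul] at h3
    have hze₀ : dist z e₀ < δ := he₀d ▸ hzδ
    have he₀i : dist e₀ i < r i := mem_ball.mp hi
    have hz2 : dist z i < 2 * r i := by
      calc dist z i ≤ dist z e₀ + dist e₀ i := dist_triangle _ _ _
        _ < 2 * r i := by linarith
    have hz_ball : z ∈ ball i (3 * r i) := mem_ball.mpr (by linarith)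
    have hw'_ball : w' ∈ ball i (3 * r i) := by
      rw [mem_ball]
      calc dist w' i ≤ dist w' z + dist z i := dist_triangle _ _ _
        _ = dist z w' + dist z i := by rw [dist_comm]
        _ < 3 * r i := by linarith
    have hexpzw := hexp2 i hiE z hz_ball w' hw'_ball
    rw [smul_inv_smul] at hexpzw
    have hcontra : c i * dist z w' < c i * dist z w' := by
      calc c i * dist z w' ≤ dist (γ i • z) w := hexpzw
        _ = infDist (γ i • z) E := hwd.symm
        _ < c₀ * infDist z E := hcon
        _ ≤ c i * dist z w' := by nlinarith
    exact lt_irrefl _ hcontra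
  have hc₀pos : (0:ℝ) < c₀ := lt_trans one_pos hc₀
  have key : ∀ n : ℕ, ∀ z : Z, z ∉ E → δ < c₀ ^ n * infDist z E →
      ∃ g : Γ, δ ≤ infDist (g • z) E := by
    intro n
    induction n with
    | zero =>
      intro z hz h
      rw [pow_zero, one_mul] at h
      exact ⟨1, by simpa using h.le⟩
    | succ n ih =>
      intro z hz h
      by_cases hδz : δ ≤ infDist z E
      · exact ⟨1, by simpa using hδz⟩
      · push_neg at hδz
        obtain ⟨g, hg⟩ := step z hz hδz
        have hzpos : 0 < infDist z E := (hEclosed.notMem_iff_infDist_pos hEne).mp hz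
        have hgpos : 0 < infDist (g • z) E :=
          lt_of_lt_of_le (by positivity) hg
        have hgzE : g • z ∉ E := by
          intro hmem
          rw [infDist_zero_of_mem hmem] at hgpos
          exact lt_irrefl _ hgpos
        have h' : δ < c₀ ^ n * infDist (g • z) E := by
          have hstep : δ < c₀ ^ n * (c₀ * infDist z E) := by
            rw [← mul_assoc, ← pow_succ]
            exact h
          calc δ < c₀ ^ n * (c₀ * infDist z E) := hstep
            _ ≤ c₀ ^ n * infDist (g • z) E :=
              mul_le_mul_of_nonneg_left hg (pow_pos hc₀pos n).le
        obtain ⟨g', hg'⟩ := ih (g • z) hgzE h'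
        exact ⟨g' * g, by rwa [mul_smul]⟩
  refine ⟨{z | δ ≤ infDist z E}, ?_, ?_, ?_⟩
  · exact (isClosed_le continuous_const (continuous_infDist_pt E)).isCompact
  · intro z hz
    simp only [Set.mem_setOf_eq] at hz
    intro hmem
    rw [infDist_zero_of_mem hmem] at hz
    linarith
  · apply subset_antisymm
    · intro z hz
      rcases Set.mem_iUnion.mp hz with ⟨g, hg⟩
      obtain ⟨k, hk, rfl⟩ := Set.mem_smul_set.mp hg
      simp only [Set.mem_setOf_eq] at hk
      intro hmem
      have hkE : k ∈ E := by
        rw [← hEinv g⁻¹]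
        exact Set.mem_smul_set.mpr ⟨g • k, hmem, inv_smul_smul g k⟩
      rw [infDist_zero_of_mem hkE] at hk
      linarith
    · intro z hz
      have hzE : z ∉ E := hz
      have hzpos : 0 < infDist z E := (hEclosed.notMem_iff_infDist_pos hEne).mp hzE
      obtain ⟨n, hn⟩ := pow_unbounded_of_one_lt (δ / infDist z E) hc₀
      have hδn : δ < c₀ ^ n * infDist z E := by
        rw [div_lt_iff₀ hzpos] at hn
        linarith
      obtain ⟨g, hg⟩ := key n z hzE hδn
      exact Set.mem_iUnion.mpr ⟨g⁻¹, Set.mem_smul_set.mpr ⟨g • z, hg, inv_smul_smul g z⟩⟩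
end

section
/- Let m ≥ 2 and let W be the dihedral Coxeter group of order 2m with length function ℓ (values 0, 1, 1, 2, 2, …, m−1, m−1, m), Bruhat order given by u ≤ v iff u = v or ℓ(u) < ℓ(v), and order-reversing involution ι(w) = w_0 w where w_0 is the unique element of length m. Then the number of balanced thickenings (lower sets S with S ∩ ι(S) = ∅ and S ∪ ι(S) = W) equals 1 if m is odd and 2 if m is even. -/
theorem dihedral_balanced_thickenings_count (m : ℕ) (hm : 2 ≤ m)
    (W : Type*) [Group W] [Fintype W] [DecidableEq W]
    (ℓ : W → ℕ) (w0 : W)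
    (h0 : ∀ w : W, ℓ w = 0 ↔ w = 1)
    (hw0 : ℓ w0 = m)
    (htop : ∀ w : W, ℓ w = m → w = w0)
    (hle : ∀ w : W, ℓ w ≤ m)
    (htwo : ∀ k : ℕ, 1 ≤ k → k ≤ m - 1 →
      (Finset.univ.filter (fun w : W => ℓ w = k)).card = 2)
    (hcard : Fintype.card W = 2 * m)
    (hlen : ∀ w : W, ℓ (w0 * w) = m - ℓ w) :
    {S : Finset W |
        (∀ u v : W, v ∈ S → (u = v ∨ ℓ u < ℓ v) → u ∈ S) ∧
        (∀ w ∈ S, w0 * w ∉ S) ∧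
        (∀ w : W, w ∈ S ∨ w0 * w ∈ S)}.ncard = if Odd m then 1 else 2 := by
  have hw0ne : w0 ≠ 1 := by
    intro h
    have : ℓ w0 = 0 := (h0 w0).mpr h
    omega
  have hw0sq : w0 * w0 = 1 := by
    apply (h0 _).mp
    rw [hlen, hw0]; omega
  have hinv : ∀ w : W, w0 * (w0 * w) = w := by
    intro w; rw [← mul_assoc, hw0sq, one_mul]
  set S0 : Finset W := Finset.univ.filter (fun w => 2 * ℓ w < m) with hS0
  have hmemS0 : ∀ w : W, w ∈ S0 ↔ 2 * ℓ w < m := by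
    intro w; simp [hS0]
  have key1 : ∀ S : Finset W,
      (∀ u v : W, v ∈ S → (u = v ∨ ℓ u < ℓ v) → u ∈ S) →
      (∀ w ∈ S, w0 * w ∉ S) → ∀ w ∈ S, 2 * ℓ w ≤ m := by
    intro S hdown hbal w hw
    by_contra h
    push_neg at h
    have h1 : ℓ (w0 * w) < ℓ w := by
      rw [hlen]; have := hle w; omega
    exact hbal w hw (hdown _ w hw (Or.inr h1))
  have key2 : ∀ S : Finset W,
      (∀ u v : W, v ∈ S → (u = v ∨ ℓ u < ℓ v) → u ∈ S) →
      (∀ w ∈ S, w0 * w ∉ S) → (∀ w : W, w ∈ S ∨ w0 * w ∈ S) →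
      ∀ w : W, 2 * ℓ w < m → w ∈ S := by
    intro S hdown hbal htot w hw
    rcases htot w with h | h
    · exact h
    · exfalso
      have := key1 S hdown hbal _ h
      rw [hlen] at this
      have := hle w
      omega
  rcases Nat.even_or_odd m with hme | hmo
  · -- even case
    rw [if_neg (by simpa [Nat.not_odd_iff_even] using hme)]
    obtain ⟨n, hn⟩ := hme
    have hn' : m = 2 * n := by omega
    have hmid := htwo n (by omega) (by omega)
    rw [Finset.card_eq_two] at hmid
    obtain ⟨a, b, hab, hset⟩ := hmid
    have ha : ℓ a = n := by
      have : a ∈ Finset.univ.filter (fun w : W => ℓ w = n) := by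
        rw [hset]; simp
      simpa using this
    have hb : ℓ b = n := by
      have : b ∈ Finset.univ.filter (fun w : W => ℓ w = n) := by
        rw [hset]; simp
      simpa using this
    have hmidmem : ∀ w : W, ℓ w = n → w = a ∨ w = b := by
      intro w hw
      have : w ∈ Finset.univ.filter (fun w : W => ℓ w = n) := by simp [hw]
      rw [hset] at this; simpa using this
    have hw0a : w0 * a = b := by
      have h1 : ℓ (w0 * a) = n := by rw [hlen, ha]; omega
      rcases hmidmem _ h1 with h | h
      · exact absurd (mul_eq_right.mp h) hw0ne
      · exact h
    have hw0b : w0 * b = a := by rw [← hw0a, hinv]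
    have haS0 : a ∉ S0 := by rw [hmemS0, ha]; omega
    have hbS0 : b ∉ S0 := by rw [hmemS0, hb]; omega
    -- membership of the two candidates
    have hmemcand : ∀ c d : W, ℓ c = n → ℓ d = n → w0 * c = d → c ≠ d →
        (∀ w : W, ℓ w = n → w = c ∨ w = d) →
        (insert c S0) ∈ {S : Finset W |
          (∀ u v : W, v ∈ S → (u = v ∨ ℓ u < ℓ v) → u ∈ S) ∧
          (∀ w ∈ S, w0 * w ∉ S) ∧
          (∀ w : W, w ∈ S ∨ w0 * w ∈ S)} := by
      intro c d hc hd hcd hne hmm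
      refine ⟨?_, ?_, ?_⟩
      · intro u v hv huv
        rcases huv with rfl | hlt
        · exact hv
        · rcases Finset.mem_insert.mp hv with rfl | hv
          · exact Finset.mem_insert_of_mem ((hmemS0 u).mpr (by omega))
          · rw [hmemS0] at hv
            exact Finset.mem_insert_of_mem ((hmemS0 u).mpr (by omega))
      · intro w hw
        rcases Finset.mem_insert.mp hw with rfl | hw
        · rw [hcd]
          intro hd'
          rcases Finset.mem_insert.mp hd' with h | h
          · exact hne h.symm
          · rw [hmemS0] at h; omega
        · rw [hmemS0] at hw
          intro h
          rcases Finset.mem_insert.mp h with h | h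
          · have : ℓ (w0 * w) = n := by rw [h, hc]
            rw [hlen] at this
            have := hle w
            omega
          · rw [hmemS0, hlen] at h
            have := hle w
            omega
      · intro w
        rcases lt_trichotomy (2 * ℓ w) m with h | h | h
        · exact Or.inl (Finset.mem_insert_of_mem ((hmemS0 w).mpr h))
        · rcases hmm w (by omega) with rfl | rfl
          · exact Or.inl (Finset.mem_insert_self _ _)
          · right; rw [← hcd, hinv]; exact Finset.mem_insert_self _ _
        · right
          apply Finset.mem_insert_of_mem
          rw [hmemS0, hlen]
          have := hle w
          omega
    -- the set is exactly the pair
    have hsetEq : {S : Finset W |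
        (∀ u v : W, v ∈ S → (u = v ∨ ℓ u < ℓ v) → u ∈ S) ∧
        (∀ w ∈ S, w0 * w ∉ S) ∧
        (∀ w : W, w ∈ S ∨ w0 * w ∈ S)} = {insert a S0, insert b S0} := by
      ext S
      constructor
      · rintro ⟨hdown, hbal, htot⟩
        have hone : a ∈ S ∨ b ∈ S := by
          rcases htot a with h | h
          · exact Or.inl h
          · rw [hw0a] at h; exact Or.inr h
        have hchar : ∀ c : W, c ∈ S → ℓ c = n → S = insert c S0 := by
          intro c hc hcn
          ext w
          constructor
          · intro hw
            have h1 := key1 S hdown hbal w hw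
            rcases lt_or_eq_of_le h1 with h | h
            · exact Finset.mem_insert_of_mem ((hmemS0 w).mpr h)
            · have hwn : ℓ w = n := by omega
              have hcw : w0 * c ∉ S := hbal c hc
              rcases hmidmem w hwn with rfl | rfl
              · rcases hmidmem c hcn with rfl | rfl
                · exact Finset.mem_insert_self _ _
                · exact absurd (hw0b ▸ hcw) (fun h' => h' hw)
              · rcases hmidmem c hcn with rfl | rfl
                · exact absurd (hw0a ▸ hcw) (fun h' => h' hw)
                · exact Finset.mem_insert_self _ _
          · intro hw
            rcases Finset.mem_insert.mp hw with rfl | hw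
            · exact hc
            · exact key2 S hdown hbal htot w ((hmemS0 w).mp hw)
        rcases hone with h | h
        · exact Or.inl (hchar a h ha)
        · exact Or.inr (hchar b h hb)
      · rintro (rfl | rfl)
        · exact hmemcand a b ha hb hw0a hab hmidmem
        · exact hmemcand b a hb ha hw0b (Ne.symm hab)
            (fun w hw => (hmidmem w hw).symm)
    rw [hsetEq]
    apply Set.ncard_pair
    intro h
    have : a ∈ insert b S0 := h ▸ Finset.mem_insert_self a S0
    rcases Finset.mem_insert.mp this with h' | h'
    · exact hab h'
    · exact haS0 h'
  · -- odd case
    rw [if_pos hmo]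
    have hne : ∀ w : W, 2 * ℓ w ≠ m := by
      intro w h
      exact (Nat.not_even_iff_odd.mpr hmo) ⟨ℓ w, by omega⟩
    have hsetEq : {S : Finset W |
        (∀ u v : W, v ∈ S → (u = v ∨ ℓ u < ℓ v) → u ∈ S) ∧
        (∀ w ∈ S, w0 * w ∉ S) ∧
        (∀ w : W, w ∈ S ∨ w0 * w ∈ S)} = {S0} := by
      ext S
      constructor
      · rintro ⟨hdown, hbal, htot⟩
        simp only [Set.mem_singleton_iff]
        ext w
        rw [hmemS0]
        constructor
        · intro hw
          have := key1 S hdown hbal w hw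
          have := hne w
          omega
        · exact key2 S hdown hbal htot w
      · rintro rfl
        refine ⟨?_, ?_, ?_⟩
        · intro u v hv huv
          rcases huv with rfl | hlt
          · exact hv
          · rw [hmemS0] at hv ⊢; omega
        · intro w hw
          rw [hmemS0] at hw
          rw [hmemS0, hlen]
          have := hle w
          omega
        · intro w
          rw [hmemS0, hmemS0, hlen]
          have := hle w
          have := hne w
          omega
    rw [hsetEq]
    exact Set.ncard_singleton _
end

section
/- Let W be a finite poset with an order-reversing involution ι, let Th ⊆ W be a fat lower set (Th ∪ ι(Th) = W), let Z be a topological space with a group Γ acting by homeomorphisms, let Λ be a set, and let δ: Z × Λ → W be a function. Define Th(Λ) = { ξ ∈ Z : ∃ λ ∈ Λ, δ(ξ, λ) ∈ Th }. Assume: whenever ξ, ξ' ∈ Z are Γ-dynamically related, there exist λ, λ' ∈ Λ with δ(ξ', λ') ≤ ι(δ(ξ, λ)). Then no two points of Z ∖ Th(Λ) are Γ-dynamically related; in particular, if Z is metrizable and locally compact and Z ∖ Th(Λ) is open and Γ-invariant, the Γ-action on Z ∖ Th(Λ) is properly discontinuous. -/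
open Pointwise

theorem fat_thickening_proper_discontinuity {W : Type*} [PartialOrder W] [Finite W]
    (ι : W → W) (hinv : ∀ w, ι (ι w) = w) (hrev : ∀ u v : W, u ≤ v → ι v ≤ ι u)
    (Th : Set W) (hlow : IsLowerSet Th) (hfat : ∀ w : W, w ∈ Th ∨ ι w ∈ Th)
    {Z : Type*} [TopologicalSpace Z] [TopologicalSpace.MetrizableSpace Z]
    [LocallyCompactSpace Z]
    {Γ : Type*} [Group Γ] [MulAction Γ Z] [ContinuousConstSMul Γ Z]
    {Λ : Type*} (δ : Z → Λ → W)
    (hkey : ∀ ξ ξ' : Z, DynRel Γ ξ ξ' → ∃ l l' : Λ, δ ξ' l' ≤ ι (δ ξ l))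
    (Ω : Set Z) (hΩ : Ω = {ξ : Z | ∃ l : Λ, δ ξ l ∈ Th}ᶜ)
    (hΩopen : IsOpen Ω) (hΩinv : ∀ γ : Γ, γ • Ω = Ω) :
    (∀ ξ ∈ Ω, ∀ ξ' ∈ Ω, ¬ DynRel Γ ξ ξ') ∧
    (∀ K : Set Z, K ⊆ Ω → IsCompact K → {γ : Γ | ((γ • K) ∩ K).Nonempty}.Finite) := by
  have hnot : ∀ ξ ∈ Ω, ∀ ξ' ∈ Ω, ¬ DynRel Γ ξ ξ' := by
    intro ξ hξ ξ' hξ' hdr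
    obtain ⟨l, l', hle⟩ := hkey ξ ξ' hdr
    rw [hΩ] at hξ hξ'
    have h1 : δ ξ l ∉ Th := fun h => hξ ⟨l, h⟩
    have h2 : ι (δ ξ l) ∈ Th := (hfat (δ ξ l)).resolve_left h1
    exact hξ' ⟨l', hlow hle h2⟩
  refine ⟨hnot, fun K hKΩ hK => ?_⟩
  by_contra hfin
  have hS : {γ : Γ | ((γ • K) ∩ K).Nonempty}.Infinite := hfin
  set S := {γ : Γ | ((γ • K) ∩ K).Nonempty} with hSdef
  have hchoice : ∀ γ : S, ∃ x : Z, x ∈ K ∧ (γ : Γ) • x ∈ K := by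
    rintro ⟨γ, hγ⟩
    obtain ⟨z, hz1, hz2⟩ := hγ
    obtain ⟨x, hx, rfl⟩ := hz1
    exact ⟨x, hx, hz2⟩
  choose u hu hv using hchoice
  haveI : Infinite S := hS.to_subtype
  let 𝒰 : Ultrafilter S := Ultrafilter.of Filter.cofinite
  have hle : (𝒰 : Filter S) ≤ Filter.cofinite := Ultrafilter.of_le _
  obtain ⟨ξ, hξK, hconvu⟩ := hK.ultrafilter_le_nhds (𝒰.map u)
    (by rw [Filter.le_principal_iff]; exact Filter.univ_mem' (f := (𝒰 : Filter S)) (s := u ⁻¹' K) hu)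
  obtain ⟨ξ', hξ'K, hconvv⟩ := hK.ultrafilter_le_nhds
    (𝒰.map (fun γ : S => (γ : Γ) • u γ))
    (by rw [Filter.le_principal_iff]; exact Filter.univ_mem' (f := (𝒰 : Filter S)) (s := (fun γ : S => (γ : Γ) • u γ) ⁻¹' K) hv)
  apply hnot ξ (hKΩ hξK) ξ' (hKΩ hξ'K)
  intro U hU U' hU'
  have hA : {γ : S | u γ ∈ U ∧ (γ : Γ) • u γ ∈ U'} ∈ 𝒰 := by
    have h1 : {γ : S | u γ ∈ U} ∈ 𝒰 := hconvu hU
    have h2 : {γ : S | (γ : Γ) • u γ ∈ U'} ∈ 𝒰 := hconvv hU'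
    exact Filter.inter_mem h1 h2
  have hAinf : {γ : S | u γ ∈ U ∧ (γ : Γ) • u γ ∈ U'}.Infinite := by
    intro hfin'
    have : {γ : S | u γ ∈ U ∧ (γ : Γ) • u γ ∈ U'}ᶜ ∈ 𝒰 :=
      hle (hfin'.compl_mem_cofinite)
    exact (Filter.empty_notMem (𝒰 : Filter S)) (by
      simpa using Filter.inter_mem hA this)
  have himg : (Subtype.val '' {γ : S | u γ ∈ U ∧ (γ : Γ) • u γ ∈ U'}).Infinite :=
    hAinf.image Subtype.val_injective.injOn
  refine himg.mono ?_
  rintro γ ⟨⟨γ', hγ'⟩, ⟨h1, h2⟩, rfl⟩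
  exact ⟨γ' • u ⟨γ', hγ'⟩, Set.smul_mem_smul_set h1, h2⟩
end

section
/- Let S be a Hausdorff topological space, n ≥ 1, and a_1, …, a_n > 0 real weights with total mass M = Σ a_i. For z = (s_1, …, s_n) ∈ Sⁿ and s ∈ S, let μ_z({s}) = Σ_{i : s_i = s} a_i. Then the set of stable configurations { z ∈ Sⁿ : μ_z({s}) < M/2 for all s ∈ S } is open in the product topology on Sⁿ. -/
theorem stable_configurations_open {S : Type*} [TopologicalSpace S] [T2Space S]
    (n : ℕ) (hn : 1 ≤ n) (a : Fin n → ℝ) (ha : ∀ i, 0 < a i) :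
    IsOpen {z : Fin n → S | ∀ s : S,
      (∑ i : Fin n, Set.indicator {j : Fin n | z j = s} a i) < (∑ i : Fin n, a i) / 2} := by
  classical
  have hM : 0 < ∑ i : Fin n, a i := by
    apply Finset.sum_pos (fun i _ => ha i)
    exact Finset.univ_nonempty_iff.mpr (Fin.pos_iff_nonempty.mp hn)
  have hsum : ∀ (z : Fin n → S) (s : S),
      (∑ i : Fin n, Set.indicator {j : Fin n | z j = s} a i)
        = ∑ j ∈ Finset.univ.filter (fun j => z j = s), a j := by
    intro z s
    rw [Finset.sum_indicator_eq_sum_filter]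
    rfl
  have key : {z : Fin n → S | ∀ s : S,
      (∑ i : Fin n, Set.indicator {j : Fin n | z j = s} a i) < (∑ i : Fin n, a i) / 2}
      = ⋂ T : Finset (Fin n), ⋂ (_ : (∑ i : Fin n, a i) / 2 ≤ ∑ j ∈ T, a j),
          {z : Fin n → S | ∃ j ∈ T, ∃ k ∈ T, z j ≠ z k} := by
    ext z
    simp only [Set.mem_setOf_eq, Set.mem_iInter]
    constructor
    · intro hz T hT
      have hTne : T.Nonempty := by
        rcases T.eq_empty_or_nonempty with h | h
        · exfalso; rw [h] at hT; simp at hT; linarith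
        · exact h
      obtain ⟨i, hi⟩ := hTne
      by_contra hcon
      push_neg at hcon
      have : ∀ j ∈ T, z j = z i := fun j hj => hcon j hj i hi
      have hle : ∑ j ∈ T, a j ≤ ∑ j ∈ Finset.univ.filter (fun j => z j = z i), a j := by
        apply Finset.sum_le_sum_of_subset_of_nonneg
        · intro j hj
          simp [this j hj]
        · intro j _ _; exact (ha j).le
      have := hz (z i)
      rw [hsum] at this
      linarith
    · intro hz s
      rw [hsum]
      by_contra hcon
      push_neg at hcon
      obtain ⟨j, hj, k, hk, hjk⟩ := hz _ hcon
      simp only [Finset.mem_filter] at hj hk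
      exact hjk (hj.2.trans hk.2.symm)
  rw [key]
  refine isOpen_iInter_of_finite fun T => isOpen_iInter_of_finite fun _ => ?_
  have : {z : Fin n → S | ∃ j ∈ T, ∃ k ∈ T, z j ≠ z k}
      = ⋃ j ∈ T, ⋃ k ∈ T, {z : Fin n → S | z j ≠ z k} := by
    ext z; simp
  rw [this]
  refine isOpen_biUnion fun j _ => isOpen_biUnion fun k _ => ?_
  exact isOpen_ne_fun (continuous_apply j) (continuous_apply k)
end
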